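/- arXiv:1810.13150 — 3 statements merged into one kernel-verified Lean document; each statement's English description precedes it below -/
import Mathlib

section
/- Gap for the harmonic Kac operator: For every c' > 0 there exist constants c'' > 0 and W₀ such that for all W ≥ W₀, the self-adjoint integral operator on L²(ℝ²) with kernel e^{-c'|λ|²} · (W²/(2π)) e^{-½W²|λ-λ'|²} · e^{-c'|λ'|²} has L² operator norm at most 1 - c''/W. -/
open MeasureTheory ENNReal NNReal

namespace Stmt10Aux

noncomputable def K (c' W : ℝ) (x y : ℝ × ℝ) : ℝ :=
  Real.exp (-c'*(x.1^2+x.2^2)) * (W^2/(2*Real.pi)) *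
    Real.exp (-(1/2)*W^2*((x.1-y.1)^2 + (x.2-y.2)^2)) *
    Real.exp (-c'*(y.1^2+y.2^2))

lemma K_nonneg (c' W : ℝ) (x y : ℝ × ℝ) : 0 ≤ K c' W x y := by
  unfold K; positivity

lemma K_symm (c' W : ℝ) (x y : ℝ × ℝ) : K c' W x y = K c' W y x := by
  unfold K
  rw [show (x.1-y.1)^2 + (x.2-y.2)^2 = (y.1-x.1)^2 + (y.2-x.2)^2 by ring]
  ring

lemma K_cont (c' W : ℝ) : Continuous (fun z : (ℝ×ℝ)×(ℝ×ℝ) => K c' W z.1 z.2) := by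
  unfold K; fun_prop

/-- integrability of a shifted gaussian product -/
lemma gsi (a b u : ℝ) (ha : 0 < a) (hb : 0 < b) :
    Integrable (fun v : ℝ => Real.exp (-(a*(u-v)^2) - b*v^2)) := by
  have hab : 0 < a + b := by linarith
  have h : (fun v : ℝ => Real.exp (-(a*(u-v)^2) - b*v^2))
      = fun v => Real.exp (-(a+b) * (v - a*u/(a+b))^2) * Real.exp (-(a*b/(a+b)*u^2)) := by
    funext v
    rw [← Real.exp_add]
    congr 1
    field_simp
    ring
  rw [h]
  exact ((integrable_exp_neg_mul_sq hab).comp_sub_right _).mul_const _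

/-- the shifted gaussian integral -/
lemma gse (a b u : ℝ) (ha : 0 < a) (hb : 0 < b) :
    ∫ v : ℝ, Real.exp (-(a*(u-v)^2) - b*v^2)
      = Real.sqrt (Real.pi/(a+b)) * Real.exp (-(a*b/(a+b)*u^2)) := by
  have hab : 0 < a + b := by linarith
  have h : (fun v : ℝ => Real.exp (-(a*(u-v)^2) - b*v^2))
      = fun v => Real.exp (-(a+b) * (v - a*u/(a+b))^2) * Real.exp (-(a*b/(a+b)*u^2)) := by
    funext v
    rw [← Real.exp_add]
    congr 1
    field_simp
    ring
  rw [h, integral_mul_const,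
    integral_sub_right_eq_self (μ := volume) (fun v => Real.exp (-(a+b) * v^2)) (a*u/(a+b)),
    integral_gaussian]

/-- the key gaussian row-sum bound -/
lemma rowsum (c' α W : ℝ) (hc' : 0 < c') (hα : 0 < α) (hW : 0 < W)
    (hexp : α ≤ c' + (W^2/2)*(c'+α)/((W^2/2)+(c'+α))) (x : ℝ × ℝ) :
    ∫⁻ y : ℝ × ℝ, ENNReal.ofReal (K c' W x y * Real.exp (-α*(y.1^2+y.2^2)))
      ≤ ENNReal.ofReal ((W^2/(W^2+2*(c'+α))) * Real.exp (-α*(x.1^2+x.2^2))) := by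
  have hπ : (0:ℝ) < Real.pi := Real.pi_pos
  have ha : (0:ℝ) < W^2/2 := by positivity
  have hb : (0:ℝ) < c' + α := by linarith
  set C : ℝ := Real.exp (-c'*(x.1^2+x.2^2)) * (W^2/(2*Real.pi)) with hC
  set F : ℝ → ℝ → ℝ := fun u v => Real.exp (-((W^2/2)*(u-v)^2) - (c'+α)*v^2) with hF
  have comb : ∀ A B C D c0 : ℝ,
      Real.exp A * c0 * Real.exp B * Real.exp C * Real.exp D = c0 * Real.exp (A+(B+(C+D))) := by
    intros A B C D c0
    rw [Real.exp_add, Real.exp_add, Real.exp_add]; ring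
  have comb2 : ∀ A p q c0 : ℝ,
      (Real.exp A * c0) * (Real.exp p * Real.exp q) = c0 * Real.exp (A+(p+q)) := by
    intros A p q c0
    rw [Real.exp_add, Real.exp_add]; ring
  have hfe : ∀ y : ℝ × ℝ, K c' W x y * Real.exp (-α*(y.1^2+y.2^2))
      = C * (F x.1 y.1 * F x.2 y.2) := by
    intro y
    unfold K
    rw [hC, hF]
    simp only
    rw [comb, comb2]
    congr 1
    ring
  have hi1 := gsi (W^2/2) (c'+α) x.1 ha hb
  have hi2 := gsi (W^2/2) (c'+α) x.2 ha hb
  have hint : Integrable (fun y : ℝ × ℝ => C * (F x.1 y.1 * F x.2 y.2)) volume := by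
    rw [Measure.volume_eq_prod]
    exact (hi1.mul_prod hi2).const_mul C
  calc ∫⁻ y : ℝ × ℝ, ENNReal.ofReal (K c' W x y * Real.exp (-α*(y.1^2+y.2^2)))
      = ∫⁻ y : ℝ × ℝ, ENNReal.ofReal (C * (F x.1 y.1 * F x.2 y.2)) := by
        apply lintegral_congr
        intro y
        rw [hfe y]
    _ = ENNReal.ofReal (∫ y : ℝ × ℝ, C * (F x.1 y.1 * F x.2 y.2)) := by
        rw [← ofReal_integral_eq_lintegral_ofReal hint]
        exact ae_of_all _ fun y => by rw [hF, hC]; positivity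
    _ = ENNReal.ofReal (C * ((∫ v, F x.1 v) * (∫ v, F x.2 v))) := by
        rw [Measure.volume_eq_prod, integral_const_mul, integral_prod_mul]
    _ ≤ ENNReal.ofReal ((W^2/(W^2+2*(c'+α))) * Real.exp (-α*(x.1^2+x.2^2))) := by
        apply ENNReal.ofReal_le_ofReal
        rw [hF]
        simp only
        rw [gse _ _ _ ha hb, gse _ _ _ ha hb]
        set s : ℝ := Real.sqrt (Real.pi/(W^2/2+(c'+α))) with hs
        set k : ℝ := (W^2/2)*(c'+α)/(W^2/2+(c'+α)) with hk
        have hss : s*s = Real.pi/(W^2/2+(c'+α)) := by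
          rw [hs]
          exact Real.mul_self_sqrt (by positivity)
        have hab2 : (0:ℝ) < W^2/2+(c'+α) := by positivity
        have hcoef : W^2/(2*Real.pi) * (s*s) = W^2/(W^2+2*(c'+α)) := by
          rw [hss]
          field_simp
        have hd : 0 ≤ c' + k - α := by linarith [hexp]
        have key : Real.exp (-c'*(x.1^2+x.2^2)) * (Real.exp (-(k*x.1^2)) * Real.exp (-(k*x.2^2)))
            ≤ Real.exp (-α*(x.1^2+x.2^2)) := by
          rw [← Real.exp_add, ← Real.exp_add, Real.exp_le_exp]
          nlinarith [mul_nonneg hd (sq_nonneg x.1), mul_nonneg hd (sq_nonneg x.2)]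
        calc C * (s * Real.exp (-(k*x.1^2)) * (s * Real.exp (-(k*x.2^2))))
            = (W^2/(2*Real.pi) * (s*s)) *
              (Real.exp (-c'*(x.1^2+x.2^2)) * (Real.exp (-(k*x.1^2)) * Real.exp (-(k*x.2^2)))) := by
              rw [hC]; ring
          _ = (W^2/(W^2+2*(c'+α))) *
              (Real.exp (-c'*(x.1^2+x.2^2)) * (Real.exp (-(k*x.1^2)) * Real.exp (-(k*x.2^2)))) := by
              rw [hcoef]
          _ ≤ (W^2/(W^2+2*(c'+α))) * Real.exp (-α*(x.1^2+x.2^2)) := by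
              apply mul_le_mul_of_nonneg_left key (by positivity)

end Stmt10Aux

set_option maxHeartbeats 2000000 in
/-- Spectral gap for the harmonic Kac operator `e^{-c'λ²} δ*_{W²} e^{-c'λ²}` on `L²(ℝ²)`. -/
theorem stmt10 (c' : ℝ) (hc' : 0 < c') : ∃ c'' > (0:ℝ), ∃ W₀ : ℝ, ∀ W : ℝ, W₀ ≤ W →
    ∀ f : (ℝ × ℝ) → ℝ, MemLp f 2 (volume : Measure (ℝ × ℝ)) →
      eLpNorm (fun x : ℝ × ℝ => ∫ y : ℝ × ℝ,
          Real.exp (-c'*(x.1^2+x.2^2)) * (W^2/(2*Real.pi)) *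
            Real.exp (-(1/2)*W^2*((x.1-y.1)^2 + (x.2-y.2)^2)) *
            Real.exp (-c'*(y.1^2+y.2^2)) * f y ∂(volume : Measure (ℝ × ℝ)))
          2 (volume : Measure (ℝ × ℝ))
        ≤ ENNReal.ofReal (1 - c''/W) * eLpNorm f 2 (volume : Measure (ℝ × ℝ)) := by
  refine ⟨Real.sqrt c' / 2, by positivity, Real.sqrt c', fun W hW f hf => ?_⟩
  have hsc : 0 < Real.sqrt c' := Real.sqrt_pos.2 hc'
  have hW0 : 0 < W := lt_of_lt_of_le hsc hW
  have hs2 : Real.sqrt c' ^ 2 = c' := Real.sq_sqrt hc'.le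
  set α : ℝ := Real.sqrt c' * W / 2 with hα_def
  have hα : 0 < α := by positivity
  set Λ : ℝ := W^2/(W^2+2*(c'+α)) with hΛ_def
  have hΛ0 : 0 < Λ := by positivity
  -- the exponent condition for the weight
  have hexp : α ≤ c' + (W^2/2)*(c'+α)/((W^2/2)+(c'+α)) := by
    have hD : (0:ℝ) < (W^2/2)+(c'+α) := by positivity
    rw [← sub_le_iff_le_add', le_div_iff₀ hD]
    simp only [hα_def]
    nlinarith [sq_nonneg W, mul_nonneg hc'.le (sq_nonneg W), sq_nonneg c', hsc.le, hW0.le,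
      mul_pos hc' hW0, mul_pos hsc hW0]
  -- the final numeric bound
  have hΛle : Λ ≤ 1 - (Real.sqrt c'/2)/W := by
    have h1 : (0:ℝ) < W^2+2*(c'+α) := by positivity
    have h2 : 1 - (Real.sqrt c'/2)/W = (W - Real.sqrt c'/2)/W := by field_simp
    rw [hΛ_def, h2, div_le_div_iff₀ h1 hW0]
    simp only [hα_def]
    nlinarith [mul_le_mul_of_nonneg_right hW hc'.le, hsc.le, hW0.le, mul_pos hsc hW0,
      mul_nonneg (mul_nonneg hsc.le hW0.le) hW0.le]
  -- weights
  set p : (ℝ×ℝ) → ℝ := fun y => Real.exp (-α*(y.1^2+y.2^2)) with hp_def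
  set q : (ℝ×ℝ) → ℝ := fun y => Real.exp (α*(y.1^2+y.2^2)) with hq_def
  have hp_pos : ∀ y, 0 < p y := fun y => Real.exp_pos _
  have hq_pos : ∀ y, 0 < q y := fun y => Real.exp_pos _
  have hpq1 : ∀ y, p y * q y = 1 := by
    intro y
    rw [hp_def, hq_def]
    simp only
    rw [← Real.exp_add, show -α*(y.1^2+y.2^2) + α*(y.1^2+y.2^2) = 0 by ring, Real.exp_zero]
  have hp_cont : Continuous p := by rw [hp_def]; fun_prop
  have hq_cont : Continuous q := by rw [hq_def]; fun_prop
  -- measurable representative of f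
  obtain ⟨f', hf'sm, hff'⟩ := hf.1
  have hf'm : Measurable f' := hf'sm.measurable
  set N : (ℝ×ℝ) → ℝ≥0∞ := fun y => (‖f' y‖₊ : ℝ≥0∞) with hN_def
  have hNm : Measurable N := hf'm.nnnorm.coe_nnreal_ennreal
  -- rewrite the operator with K and f'
  have hKdef : (fun x : ℝ × ℝ => ∫ y : ℝ × ℝ,
          Real.exp (-c'*(x.1^2+x.2^2)) * (W^2/(2*Real.pi)) *
            Real.exp (-(1/2)*W^2*((x.1-y.1)^2 + (x.2-y.2)^2)) *
            Real.exp (-c'*(y.1^2+y.2^2)) * f y ∂(volume : Measure (ℝ × ℝ)))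
      = fun x => ∫ y : ℝ × ℝ, Stmt10Aux.K c' W x y * f' y := by
    funext x
    apply integral_congr_ae
    filter_upwards [hff'] with y hy
    rw [Stmt10Aux.K, hy]
  rw [hKdef, eLpNorm_congr_ae hff']
  -- continuity facts
  have hKxc : ∀ x : ℝ×ℝ, Continuous (fun y => Stmt10Aux.K c' W x y) := by
    intro x; unfold Stmt10Aux.K; fun_prop
  have hKyc : ∀ y : ℝ×ℝ, Continuous (fun x => Stmt10Aux.K c' W x y) := by
    intro y; unfold Stmt10Aux.K; fun_prop
  -- rpow helpers
  have hz : ∀ z : ℝ≥0∞, (z*z) ^ ((1:ℝ)/2) = z := by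
    intro z
    rw [show z*z = z^(2:ℝ) by rw [ENNReal.rpow_two, pow_two], ← ENNReal.rpow_mul]
    norm_num
  have hz2 : ∀ u : ℝ≥0∞, (u ^ ((1:ℝ)/2)) ^ (2:ℝ) = u := by
    intro u
    rw [← ENNReal.rpow_mul]
    norm_num
  -- row and column bounds
  have hrow : ∀ x : ℝ×ℝ, ∫⁻ y : ℝ×ℝ, ENNReal.ofReal (Stmt10Aux.K c' W x y * p y)
      ≤ ENNReal.ofReal (Λ * p x) :=
    fun x => Stmt10Aux.rowsum c' α W hc' hα hW0 hexp x
  have hcol : ∀ y : ℝ×ℝ, ∫⁻ x : ℝ×ℝ, ENNReal.ofReal (Stmt10Aux.K c' W x y * p x)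
      ≤ ENNReal.ofReal (Λ * p y) := by
    intro y
    have : ∀ x : ℝ×ℝ, Stmt10Aux.K c' W x y * p x = Stmt10Aux.K c' W y x * p x := by
      intro x; rw [Stmt10Aux.K_symm]
    calc ∫⁻ x : ℝ×ℝ, ENNReal.ofReal (Stmt10Aux.K c' W x y * p x)
        = ∫⁻ x : ℝ×ℝ, ENNReal.ofReal (Stmt10Aux.K c' W y x * p x) := by
          apply lintegral_congr; intro x; rw [this x]
      _ ≤ ENNReal.ofReal (Λ * p y) := Stmt10Aux.rowsum c' α W hc' hα hW0 hexp y
  -- pointwise squared bound via Cauchy-Schwarz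
  have hptwise : ∀ x : ℝ×ℝ, (‖∫ y : ℝ×ℝ, Stmt10Aux.K c' W x y * f' y‖₊ : ℝ≥0∞) ^ (2:ℝ)
      ≤ ENNReal.ofReal (Λ * p x) *
        ∫⁻ y : ℝ×ℝ, ENNReal.ofReal (Stmt10Aux.K c' W x y * q y) * N y ^ (2:ℝ) := by
    intro x
    set A : (ℝ×ℝ) → ℝ≥0∞ := fun y => (ENNReal.ofReal (Stmt10Aux.K c' W x y * p y)) ^ ((1:ℝ)/2)
      with hA_def
    set B : (ℝ×ℝ) → ℝ≥0∞ := fun y =>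
      (ENNReal.ofReal (Stmt10Aux.K c' W x y * q y)) ^ ((1:ℝ)/2) * N y with hB_def
    have hAm : AEMeasurable A (volume : Measure (ℝ×ℝ)) := by
      rw [hA_def]
      exact ((ENNReal.measurable_ofReal.comp ((hKxc x).mul hp_cont).measurable).pow_const
        _).aemeasurable
    have hBm : AEMeasurable B (volume : Measure (ℝ×ℝ)) := by
      rw [hB_def]
      exact (((ENNReal.measurable_ofReal.comp ((hKxc x).mul hq_cont).measurable).pow_const
        _).mul hNm).aemeasurable
    have hAB : ∀ y, ENNReal.ofReal (Stmt10Aux.K c' W x y) * N y = A y * B y := by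
      intro y
      rw [hA_def, hB_def]
      simp only
      rw [← mul_assoc, ← ENNReal.mul_rpow_of_nonneg _ _ (by norm_num : (0:ℝ) ≤ 1/2),
        ← ENNReal.ofReal_mul (mul_nonneg (Stmt10Aux.K_nonneg c' W x y) (hp_pos y).le),
        show Stmt10Aux.K c' W x y * p y * (Stmt10Aux.K c' W x y * q y)
          = (Stmt10Aux.K c' W x y * Stmt10Aux.K c' W x y) * (p y * q y) by ring,
        hpq1 y, mul_one,
        ENNReal.ofReal_mul (Stmt10Aux.K_nonneg c' W x y), hz]
    have hpq2 : (2:ℝ).HolderConjugate 2 := Real.holderConjugate_iff.mpr ⟨one_lt_two, by norm_num⟩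
    have hA2 : ∫⁻ y : ℝ×ℝ, A y ^ (2:ℝ) = ∫⁻ y : ℝ×ℝ, ENNReal.ofReal (Stmt10Aux.K c' W x y * p y) := by
      apply lintegral_congr; intro y; rw [hA_def]; simp only; rw [hz2]
    have hB2 : ∫⁻ y : ℝ×ℝ, B y ^ (2:ℝ)
        = ∫⁻ y : ℝ×ℝ, ENNReal.ofReal (Stmt10Aux.K c' W x y * q y) * N y ^ (2:ℝ) := by
      apply lintegral_congr; intro y
      rw [hB_def]
      simp only
      rw [ENNReal.mul_rpow_of_nonneg _ _ (by norm_num : (0:ℝ) ≤ 2), hz2]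
    have step1 : (‖∫ y : ℝ×ℝ, Stmt10Aux.K c' W x y * f' y‖₊ : ℝ≥0∞)
        ≤ ∫⁻ y : ℝ×ℝ, A y * B y := by
      calc (‖∫ y : ℝ×ℝ, Stmt10Aux.K c' W x y * f' y‖₊ : ℝ≥0∞)
          ≤ ∫⁻ y : ℝ×ℝ, (‖Stmt10Aux.K c' W x y * f' y‖₊ : ℝ≥0∞) :=
            enorm_integral_le_lintegral_enorm _
        _ = ∫⁻ y : ℝ×ℝ, A y * B y := by
            apply lintegral_congr; intro y
            rw [nnnorm_mul, ENNReal.coe_mul,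
              ← enorm_eq_nnnorm (Stmt10Aux.K c' W x y), Real.enorm_eq_ofReal (Stmt10Aux.K_nonneg c' W x y), ← hAB y]
    have hold := ENNReal.lintegral_mul_le_Lp_mul_Lq (volume : Measure (ℝ×ℝ)) hpq2 hAm hBm
    have step2 : (‖∫ y : ℝ×ℝ, Stmt10Aux.K c' W x y * f' y‖₊ : ℝ≥0∞)
        ≤ ((∫⁻ y : ℝ×ℝ, A y ^ (2:ℝ)) * (∫⁻ y : ℝ×ℝ, B y ^ (2:ℝ))) ^ ((1:ℝ)/2) := by
      refine le_trans step1 (le_trans hold ?_)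
      rw [ENNReal.mul_rpow_of_nonneg _ _ (by norm_num : (0:ℝ) ≤ 1/2)]
    calc (‖∫ y : ℝ×ℝ, Stmt10Aux.K c' W x y * f' y‖₊ : ℝ≥0∞) ^ (2:ℝ)
        ≤ (((∫⁻ y : ℝ×ℝ, A y ^ (2:ℝ)) * (∫⁻ y : ℝ×ℝ, B y ^ (2:ℝ))) ^ ((1:ℝ)/2)) ^ (2:ℝ) :=
          ENNReal.rpow_le_rpow step2 (by norm_num)
      _ = (∫⁻ y : ℝ×ℝ, A y ^ (2:ℝ)) * (∫⁻ y : ℝ×ℝ, B y ^ (2:ℝ)) := hz2 _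
      _ ≤ ENNReal.ofReal (Λ * p x) *
            ∫⁻ y : ℝ×ℝ, ENNReal.ofReal (Stmt10Aux.K c' W x y * q y) * N y ^ (2:ℝ) := by
          rw [hA2, hB2]
          exact mul_le_mul_left (hrow x) _
  -- integrate the pointwise bound and swap
  have hswapmeas : AEMeasurable (Function.uncurry fun x y : ℝ×ℝ =>
      ENNReal.ofReal (p x) * (ENNReal.ofReal (Stmt10Aux.K c' W x y * q y) * N y ^ (2:ℝ)))
      ((volume : Measure (ℝ×ℝ)).prod (volume : Measure (ℝ×ℝ))) := by
    apply Measurable.aemeasurable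
    apply Measurable.mul
    · exact ENNReal.measurable_ofReal.comp (hp_cont.measurable.comp measurable_fst)
    · apply Measurable.mul
      · exact ENNReal.measurable_ofReal.comp
          (((Stmt10Aux.K_cont c' W).mul (hq_cont.comp continuous_snd)).measurable)
      · exact ((hNm.comp measurable_snd).pow_const _)
  have hglobal : ∫⁻ x : ℝ×ℝ, (‖∫ y : ℝ×ℝ, Stmt10Aux.K c' W x y * f' y‖₊ : ℝ≥0∞) ^ (2:ℝ)
      ≤ ENNReal.ofReal Λ * (ENNReal.ofReal Λ * ∫⁻ y : ℝ×ℝ, N y ^ (2:ℝ)) := by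
    calc ∫⁻ x : ℝ×ℝ, (‖∫ y : ℝ×ℝ, Stmt10Aux.K c' W x y * f' y‖₊ : ℝ≥0∞) ^ (2:ℝ)
        ≤ ∫⁻ x : ℝ×ℝ, ENNReal.ofReal Λ * (ENNReal.ofReal (p x) *
            ∫⁻ y : ℝ×ℝ, ENNReal.ofReal (Stmt10Aux.K c' W x y * q y) * N y ^ (2:ℝ)) := by
          apply lintegral_mono
          intro x
          refine le_trans (hptwise x) (le_of_eq ?_)
          rw [ENNReal.ofReal_mul hΛ0.le, mul_assoc]
      _ = ENNReal.ofReal Λ * ∫⁻ x : ℝ×ℝ, ∫⁻ y : ℝ×ℝ, ENNReal.ofReal (p x) *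
            (ENNReal.ofReal (Stmt10Aux.K c' W x y * q y) * N y ^ (2:ℝ)) := by
          rw [lintegral_const_mul' _ _ ENNReal.ofReal_ne_top]
          congr 1
          apply lintegral_congr
          intro x
          rw [lintegral_const_mul' _ _ ENNReal.ofReal_ne_top]
      _ = ENNReal.ofReal Λ * ∫⁻ y : ℝ×ℝ, ∫⁻ x : ℝ×ℝ, ENNReal.ofReal (p x) *
            (ENNReal.ofReal (Stmt10Aux.K c' W x y * q y) * N y ^ (2:ℝ)) := by
          rw [lintegral_lintegral_swap hswapmeas]
      _ ≤ ENNReal.ofReal Λ * ∫⁻ y : ℝ×ℝ, ENNReal.ofReal Λ * N y ^ (2:ℝ) := by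
          apply mul_le_mul_right
          apply lintegral_mono
          intro y
          have heq : ∀ x : ℝ×ℝ, ENNReal.ofReal (p x) *
              (ENNReal.ofReal (Stmt10Aux.K c' W x y * q y) * N y ^ (2:ℝ))
              = ENNReal.ofReal (Stmt10Aux.K c' W x y * p x) *
                (ENNReal.ofReal (q y) * N y ^ (2:ℝ)) := by
            intro x
            rw [← mul_assoc,
              ← ENNReal.ofReal_mul (hp_pos x).le,
              show p x * (Stmt10Aux.K c' W x y * q y)
                = (Stmt10Aux.K c' W x y * p x) * q y by ring,
              ENNReal.ofReal_mul (mul_nonneg (Stmt10Aux.K_nonneg c' W x y) (hp_pos x).le),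
              mul_assoc]
          calc ∫⁻ x : ℝ×ℝ, ENNReal.ofReal (p x) *
                (ENNReal.ofReal (Stmt10Aux.K c' W x y * q y) * N y ^ (2:ℝ))
              = (∫⁻ x : ℝ×ℝ, ENNReal.ofReal (Stmt10Aux.K c' W x y * p x)) *
                (ENNReal.ofReal (q y) * N y ^ (2:ℝ)) := by
                rw [← lintegral_mul_const]
                · apply lintegral_congr; intro x; rw [heq x]
                · exact ENNReal.measurable_ofReal.comp
                    (((hKyc y).mul hp_cont).measurable)
            _ ≤ ENNReal.ofReal (Λ * p y) * (ENNReal.ofReal (q y) * N y ^ (2:ℝ)) :=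
                mul_le_mul_left (hcol y) _
            _ = ENNReal.ofReal Λ * N y ^ (2:ℝ) := by
                rw [ENNReal.ofReal_mul hΛ0.le, mul_assoc, ← mul_assoc (ENNReal.ofReal (p y)),
                  ← ENNReal.ofReal_mul (hp_pos y).le, hpq1 y, ENNReal.ofReal_one, one_mul]
      _ = ENNReal.ofReal Λ * (ENNReal.ofReal Λ * ∫⁻ y : ℝ×ℝ, N y ^ (2:ℝ)) := by
          rw [lintegral_const_mul' _ _ ENNReal.ofReal_ne_top]
  -- conclude
  have hsnorm : eLpNorm (fun x : ℝ×ℝ => ∫ y : ℝ×ℝ, Stmt10Aux.K c' W x y * f' y) 2 volume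
      = (∫⁻ x : ℝ×ℝ, (‖∫ y : ℝ×ℝ, Stmt10Aux.K c' W x y * f' y‖₊ : ℝ≥0∞) ^ (2:ℝ)) ^ ((1:ℝ)/2) := by
    rw [eLpNorm_eq_lintegral_rpow_enorm_toReal (by norm_num) (by norm_num)]
    norm_num
    rfl
  have hsnormf : eLpNorm f' 2 (volume : Measure (ℝ×ℝ))
      = (∫⁻ y : ℝ×ℝ, N y ^ (2:ℝ)) ^ ((1:ℝ)/2) := by
    rw [eLpNorm_eq_lintegral_rpow_enorm_toReal (by norm_num) (by norm_num)]
    norm_num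
    rfl
  rw [hsnorm, hsnormf]
  calc (∫⁻ x : ℝ×ℝ, (‖∫ y : ℝ×ℝ, Stmt10Aux.K c' W x y * f' y‖₊ : ℝ≥0∞) ^ (2:ℝ)) ^ ((1:ℝ)/2)
      ≤ (ENNReal.ofReal Λ * (ENNReal.ofReal Λ * ∫⁻ y : ℝ×ℝ, N y ^ (2:ℝ))) ^ ((1:ℝ)/2) :=
        ENNReal.rpow_le_rpow hglobal (by norm_num)
    _ = ENNReal.ofReal Λ * (∫⁻ y : ℝ×ℝ, N y ^ (2:ℝ)) ^ ((1:ℝ)/2) := by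
        rw [← mul_assoc, ENNReal.mul_rpow_of_nonneg _ _ (by norm_num : (0:ℝ) ≤ 1/2), hz]
    _ ≤ ENNReal.ofReal (1 - Real.sqrt c' / 2 / W) * (∫⁻ y : ℝ×ℝ, N y ^ (2:ℝ)) ^ ((1:ℝ)/2) :=
        mul_le_mul_left (ENNReal.ofReal_le_ofReal hΛle) _
end

section
/- Combes–Thomas estimate: Let H be a self-adjoint operator on ℓ²(ℤ) (or ℓ²({1,…,N})) with matrix elements H_{xy}, and suppose sup_x Σ_y |H_{xy}|·(e^{δ|x-y|} - 1) ≤ S for some δ > 0, S > 0. Then for every real E and ε > 0 with ε ≥ 2S·μ for some μ ∈ (0,1], the Green function G_{xy} = ((E + iε - H)^{-1})_{xy} satisfies |G_{xy}| ≤ (2/ε)·e^{-μδ|x-y|} for all x, y. -/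
open scoped ComplexConjugate ENNReal

local notation "ℓ²" => lp (fun _ : ℤ => ℂ) 2
local notation "⟪" x ", " y "⟫" => @inner ℂ _ _ x y

namespace CT18

noncomputable section

lemma p2 : (0:ℝ) < (2:ℝ≥0∞).toReal := by norm_num

lemma rpt2 (x : ℝ) : x ^ (2:ℝ≥0∞).toReal = x ^ 2 := by
  rw [show (2:ℝ≥0∞).toReal = (2:ℝ) by norm_num]
  exact Real.rpow_two x

lemma lp2_ext {f g : ℓ²} (h : ∀ x, f x = g x) : f = g := lp.ext (funext h)

def evalCLM (x : ℤ) : ℓ² →L[ℂ] ℂ := innerSL ℂ (lp.single 2 x 1)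

@[simp] lemma evalCLM_apply (x : ℤ) (f : ℓ²) : evalCLM x f = f x := by
  simp [evalCLM, lp.inner_single_left, RCLike.inner_apply]

lemma hasSum_expand (u : ℓ²) : HasSum (fun y => lp.single 2 y (u y)) u :=
  lp.hasSum_single ENNReal.ofNat_ne_top u

lemma single_eq_smul (y : ℤ) (c : ℂ) : (lp.single 2 y c : ℓ²) = c • (lp.single 2 y (1:ℂ) : ℓ²) := by
  rw [← lp.single_smul]
  simp [smul_eq_mul]

lemma hasSum_apply (T : ℓ² →L[ℂ] ℓ²) (u : ℓ²) (x : ℤ) :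
    HasSum (fun y => u y * (T (lp.single 2 y 1) : ∀ _ : ℤ, ℂ) x)
      ((T u : ∀ _ : ℤ, ℂ) x) := by
  have h := ((hasSum_expand u).mapL T).mapL (evalCLM x)
  have h2 : ∀ y : ℤ, evalCLM x (T (lp.single 2 y (u y)))
      = u y * (T (lp.single 2 y 1) : ∀ _ : ℤ, ℂ) x := by
    intro y
    rw [single_eq_smul, map_smul, map_smul, smul_eq_mul, evalCLM_apply]
  simpa [h2] using h


section Adjoint

variable (H : ℓ² →L[ℂ] ℓ²) (Hm : ℤ → ℤ → ℂ)
  (hHm : ∀ x y : ℤ, Hm x y = (H (lp.single 2 y (1:ℂ)) : ∀ _ : ℤ, ℂ) x)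
  (hsa : ∀ x y : ℤ, Hm x y = (starRingEnd ℂ) (Hm y x))

include hHm hsa in
lemma H_adj : ContinuousLinearMap.adjoint H = H := by
  ext u y
  have h1 : HasSum (fun x : ℤ => conj ((H (lp.single 2 y 1) : ∀ _ : ℤ, ℂ) x) * u x)
      ⟪H (lp.single 2 y 1), u⟫ := by
    have := lp.hasSum_inner (𝕜 := ℂ) (H (lp.single 2 y 1)) u
    simpa [RCLike.inner_apply, mul_comm] using this
  have h2 : HasSum (fun x : ℤ => u x * (H (lp.single 2 x 1) : ∀ _ : ℤ, ℂ) y)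
      ((H u : ∀ _ : ℤ, ℂ) y) := hasSum_apply H u y
  have hterm : ∀ x : ℤ, conj ((H (lp.single 2 y 1) : ∀ _ : ℤ, ℂ) x) * u x
      = u x * (H (lp.single 2 x 1) : ∀ _ : ℤ, ℂ) y := by
    intro x
    rw [← hHm, ← hHm, hsa x y]
    ring_nf
    rw [Complex.conj_conj]
    ring
  have h3 : ⟪H (lp.single 2 y 1), u⟫ = (H u : ∀ _ : ℤ, ℂ) y := by
    refine HasSum.unique ?_ h2
    exact (funext hterm : _) ▸ h1
  have h4 : ((ContinuousLinearMap.adjoint H) u : ∀ _ : ℤ, ℂ) y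
      = ⟪H (lp.single 2 y 1), u⟫ := by
    rw [← ContinuousLinearMap.adjoint_inner_right]
    rw [← evalCLM_apply y ((ContinuousLinearMap.adjoint H) u)]
    simp [evalCLM]
  rw [h4, h3]

include hHm hsa in
lemma H_symm : ∀ u v : ℓ², ⟪H u, v⟫ = ⟪u, H v⟫ := by
  intro u v
  conv_lhs => rw [← H_adj H Hm hHm hsa]
  exact ContinuousLinearMap.adjoint_inner_left H v u

end Adjoint


section Invert

variable (H : ℓ² →L[ℂ] ℓ²) (hsymm : ∀ u v : ℓ², ⟪H u, v⟫ = ⟪u, H v⟫)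

include hsymm in
lemma lower (z : ℂ) (v : ℓ²) : |z.im| * ‖v‖ ≤ ‖z • v - H v‖ := by
  have hreal : (⟪v, H v⟫ : ℂ).im = 0 := by
    have h1 : conj (⟪v, H v⟫ : ℂ) = ⟪v, H v⟫ := by
      rw [inner_conj_symm]
      exact hsymm v v
    exact Complex.conj_eq_iff_im.mp h1
  have hinner : (⟪v, z • v - H v⟫ : ℂ) = z * ((‖v‖:ℂ))^2 - ⟪v, H v⟫ := by
    rw [inner_sub_right, inner_smul_right, inner_self_eq_norm_sq_to_K]
    rfl
  have him : (⟪v, z • v - H v⟫ : ℂ).im = z.im * ‖v‖^2 := by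
    rw [hinner, Complex.sub_im, hreal, sub_zero, Complex.mul_im]
    simp only [pow_two, Complex.mul_im, Complex.mul_re, Complex.ofReal_im, Complex.ofReal_re]
    ring
  have habs : |(⟪v, z • v - H v⟫ : ℂ).im| ≤ ‖(⟪v, z • v - H v⟫ : ℂ)‖ :=
    Complex.abs_im_le_norm _
  have hcs : ‖(⟪v, z • v - H v⟫ : ℂ)‖ ≤ ‖v‖ * ‖z • v - H v‖ := norm_inner_le_norm _ _
  have key : |z.im| * ‖v‖^2 ≤ ‖v‖ * ‖z • v - H v‖ := by
    calc |z.im| * ‖v‖^2 = |z.im * ‖v‖^2| := by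
          rw [abs_mul z.im (‖v‖^2), _root_.abs_of_nonneg (sq_nonneg ‖v‖)]
      _ = |(⟪v, z • v - H v⟫ : ℂ).im| := by rw [him]
      _ ≤ ‖(⟪v, z • v - H v⟫ : ℂ)‖ := habs
      _ ≤ _ := hcs
  rcases eq_or_lt_of_le (norm_nonneg v) with h0 | h0
  · rw [← h0]
    simp [norm_nonneg]
  · have := mul_le_mul_of_nonneg_left key (le_of_lt (inv_pos.mpr h0))
    calc |z.im| * ‖v‖ = ‖v‖⁻¹ * (|z.im| * ‖v‖^2) := by field_simp
      _ ≤ ‖v‖⁻¹ * (‖v‖ * ‖z • v - H v‖) := by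
          exact mul_le_mul_of_nonneg_left key (le_of_lt (inv_pos.mpr h0))
      _ = ‖z • v - H v‖ := by field_simp

include hsymm in
set_option maxHeartbeats 1000000 in
lemma invertible (z : ℂ) (hz : z.im ≠ 0) :
    ∃ G : ℓ² →L[ℂ] ℓ²,
      ((z • ContinuousLinearMap.id ℂ ℓ² - H).comp G = ContinuousLinearMap.id ℂ ℓ²) ∧
      (G.comp (z • ContinuousLinearMap.id ℂ ℓ² - H) = ContinuousLinearMap.id ℂ ℓ²) := by
  set A : ℓ² →L[ℂ] ℓ² := z • ContinuousLinearMap.id ℂ ℓ² - H with hA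
  have hAv : ∀ v : ℓ², A v = z • v - H v := fun v => rfl
  have hzpos : 0 < |z.im| := abs_pos.mpr hz
  have low : ∀ v : ℓ², |z.im| * ‖v‖ ≤ ‖A v‖ := by
    intro v; rw [hAv]; exact lower H hsymm z v
  have lowadj : ∀ v : ℓ², |z.im| * ‖v‖ ≤ ‖(conj z) • v - H v‖ := by
    intro v
    have := lower H hsymm (conj z) v
    simpa [Complex.conj_im, abs_neg] using this
  have hanti : AntilipschitzWith (|z.im|⁻¹).toNNReal A := by
    apply A.antilipschitz_of_bound
    intro v
    rw [Real.coe_toNNReal _ (by positivity)]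
    rcases le_or_gt ‖v‖ (|z.im|⁻¹ * ‖A v‖) with h | h
    · exact h
    · exfalso
      have hx : |z.im| * (|z.im|⁻¹ * ‖A v‖) = ‖A v‖ := by field_simp
      linarith [mul_lt_mul_of_pos_left h hzpos, low v, hx]
  have hker : LinearMap.ker (A : ℓ² →ₗ[ℂ] ℓ²) = ⊥ := by
    rw [LinearMap.ker_eq_bot]
    exact hanti.injective
  have hclosed : IsClosed (Set.range A) := hanti.isClosed_range A.uniformContinuous
  have hrange : LinearMap.range (A : ℓ² →ₗ[ℂ] ℓ²) = ⊤ := by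
    have hcl : IsClosed (LinearMap.range (A : ℓ² →ₗ[ℂ] ℓ²) : Set ℓ²) := by
      have : (LinearMap.range (A : ℓ² →ₗ[ℂ] ℓ²) : Set ℓ²) = Set.range A := by
        ext v; simp [LinearMap.mem_range]
      rw [this]; exact hclosed
    haveI : CompleteSpace (LinearMap.range (A : ℓ² →ₗ[ℂ] ℓ²)) := hcl.completeSpace_coe
    rw [← Submodule.orthogonal_eq_bot_iff]
    rw [Submodule.eq_bot_iff]
    intro v hv
    have hv' : ∀ u : ℓ², ⟪A u, v⟫ = 0 := by
      intro u
      exact hv (A u) (LinearMap.mem_range.mpr ⟨u, rfl⟩)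
    have hadj : ∀ u : ℓ², (⟪A u, v⟫ : ℂ) = ⟪u, (conj z) • v - H v⟫ := by
      intro u
      rw [hAv, inner_sub_left, inner_sub_right, inner_smul_left, inner_smul_right,
        hsymm u v]
    have hw : (conj z) • v - H v = 0 := by
      have h0 := hv' ((conj z) • v - H v)
      rw [hadj] at h0
      exact inner_self_eq_zero.mp h0
    have hle := lowadj v
    rw [hw, norm_zero] at hle
    by_contra hvne
    have hvpos : 0 < ‖v‖ := norm_pos_iff.mpr hvne
    have hcon : 0 < |z.im| * ‖v‖ := mul_pos hzpos hvpos
    exact absurd hle (not_le.mpr hcon)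
  refine ⟨(ContinuousLinearEquiv.ofBijective A hker hrange).symm.toContinuousLinearMap, ?_, ?_⟩
  · refine ContinuousLinearMap.ext fun u => ?_
    simp only [ContinuousLinearMap.comp_apply, ContinuousLinearEquiv.coe_coe,
      ContinuousLinearMap.id_apply]
    exact ContinuousLinearEquiv.ofBijective_apply_symm_apply A hker hrange u
  · refine ContinuousLinearMap.ext fun u => ?_
    simp only [ContinuousLinearMap.comp_apply, ContinuousLinearEquiv.coe_coe,
      ContinuousLinearMap.id_apply]
    exact ContinuousLinearEquiv.ofBijective_symm_apply_apply A hker hrange u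

end Invert


section Mul

lemma mem_mul (m : ℤ → ℝ) (B : ℝ) (hB : 0 ≤ B) (hm : ∀ x, |m x| ≤ B) (u : ℓ²) :
    Memℓp (fun x => (m x : ℂ) * u x) 2 := by
  apply memℓp_gen
  have hs := ((lp.memℓp u).summable p2).mul_left (B ^ (2:ℝ≥0∞).toReal)
  refine Summable.of_nonneg_of_le (fun x => Real.rpow_nonneg (norm_nonneg _) _) ?_ hs
  intro x
  have h1 : ‖(m x : ℂ) * u x‖ ≤ B * ‖u x‖ := by
    rw [norm_mul, Complex.norm_real]
    exact mul_le_mul_of_nonneg_right (hm x) (norm_nonneg _)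
  calc ‖(m x : ℂ) * u x‖ ^ (2:ℝ≥0∞).toReal
      ≤ (B * ‖u x‖) ^ (2:ℝ≥0∞).toReal :=
        Real.rpow_le_rpow (norm_nonneg _) h1 (le_of_lt p2)
    _ = B ^ (2:ℝ≥0∞).toReal * ‖u x‖ ^ (2:ℝ≥0∞).toReal := Real.mul_rpow hB (norm_nonneg _)

def mulCLM (m : ℤ → ℝ) (B : ℝ) (hB : 0 ≤ B) (hm : ∀ x, |m x| ≤ B) : ℓ² →L[ℂ] ℓ² :=
  LinearMap.mkContinuous
    { toFun := fun u => (⟨fun x => (m x : ℂ) * u x, mem_mul m B hB hm u⟩ : ℓ²)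
      map_add' := fun u v => by
        apply lp2_ext
        intro x
        simp only [lp.coeFn_add, Pi.add_apply]
        change (m x : ℂ) * ((u + v) x) = (m x : ℂ) * u x + (m x : ℂ) * v x
        rw [lp.coeFn_add]
        simp [mul_add]
      map_smul' := fun c u => by
        apply lp2_ext
        intro x
        change (m x : ℂ) * ((c • u) x) = (c • (⟨fun x => (m x : ℂ) * u x, mem_mul m B hB hm u⟩ : ℓ²)) x
        rw [lp.coeFn_smul, lp.coeFn_smul]
        simp only [Pi.smul_apply, smul_eq_mul]
        ring }
    B (by
      intro u
      apply lp.norm_le_of_forall_sum_le p2 (mul_nonneg hB (norm_nonneg u))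
      intro s
      have hpt : ∀ x : ℤ, ‖(m x : ℂ) * u x‖ ^ (2:ℝ≥0∞).toReal
          ≤ B ^ (2:ℝ≥0∞).toReal * ‖u x‖ ^ (2:ℝ≥0∞).toReal := by
        intro x
        have h1 : ‖(m x : ℂ) * u x‖ ≤ B * ‖u x‖ := by
          rw [norm_mul, Complex.norm_real]
          exact mul_le_mul_of_nonneg_right (hm x) (norm_nonneg _)
        calc ‖(m x : ℂ) * u x‖ ^ (2:ℝ≥0∞).toReal
            ≤ (B * ‖u x‖) ^ (2:ℝ≥0∞).toReal :=
              Real.rpow_le_rpow (norm_nonneg _) h1 (le_of_lt p2)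
          _ = _ := Real.mul_rpow hB (norm_nonneg _)
      calc (∑ x ∈ s, ‖(m x : ℂ) * u x‖ ^ (2:ℝ≥0∞).toReal)
          ≤ ∑ x ∈ s, B ^ (2:ℝ≥0∞).toReal * ‖u x‖ ^ (2:ℝ≥0∞).toReal :=
            Finset.sum_le_sum fun x _ => hpt x
        _ = B ^ (2:ℝ≥0∞).toReal * ∑ x ∈ s, ‖u x‖ ^ (2:ℝ≥0∞).toReal := by
            rw [Finset.mul_sum]
        _ ≤ B ^ (2:ℝ≥0∞).toReal * ‖u‖ ^ (2:ℝ≥0∞).toReal := by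
            refine mul_le_mul_of_nonneg_left ?_ (Real.rpow_nonneg hB _)
            exact lp.sum_rpow_le_norm_rpow p2 u s
        _ = (B * ‖u‖) ^ (2:ℝ≥0∞).toReal := (Real.mul_rpow hB (norm_nonneg _)).symm)

lemma mulCLM_apply (m : ℤ → ℝ) (B : ℝ) (hB : 0 ≤ B) (hm : ∀ x, |m x| ≤ B) (u : ℓ²) (x : ℤ) :
    (mulCLM m B hB hm u : ∀ _ : ℤ, ℂ) x = (m x : ℂ) * u x := rfl

end Mul


section Schur

lemma schur (K : ℓ² →L[ℂ] ℓ²) (a : ℤ → ℤ → ℝ) (C : ℝ) (hC : 0 ≤ C)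
    (ha0 : ∀ x y, 0 ≤ a x y) (hsym : ∀ x y, a x y = a y x)
    (hKa : ∀ x y, ‖(K (lp.single 2 y 1) : ∀ _ : ℤ, ℂ) x‖ ≤ a x y)
    (hasum : ∀ x, Summable (a x)) (hrow : ∀ x, ∑' y, a x y ≤ C)
    (u : ℓ²) : ‖K u‖ ≤ C * ‖u‖ := by
  set b : ℤ → ℝ := fun y => ‖u y‖ with hbdef
  have hb0 : ∀ y, 0 ≤ b y := fun y => norm_nonneg _
  have hbu : ∀ y, b y ≤ ‖u‖ := fun y => lp.norm_apply_le_norm two_ne_zero u y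
  have hub2 : Summable (fun y => b y ^ 2) := by
    have := (lp.memℓp u).summable p2
    simpa [rpt2] using this
  have hnu2 : ‖u‖ ^ 2 = ∑' y, b y ^ 2 := by
    have := lp.norm_rpow_eq_tsum p2 u
    simpa [rpt2] using this
  have hsab : ∀ x, Summable (fun y => a x y * b y) := by
    intro x
    refine Summable.of_nonneg_of_le (fun y => mul_nonneg (ha0 _ _) (hb0 _)) ?_
      ((hasum x).mul_right ‖u‖)
    intro y
    exact mul_le_mul_of_nonneg_left (hbu y) (ha0 _ _)
  have hsab2 : ∀ x, Summable (fun y => a x y * b y ^ 2) := by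
    intro x
    refine Summable.of_nonneg_of_le (fun y => mul_nonneg (ha0 _ _) (sq_nonneg _)) ?_
      ((hasum x).mul_right (‖u‖ ^ 2))
    intro y
    exact mul_le_mul_of_nonneg_left (pow_le_pow_left₀ (hb0 y) (hbu y) 2) (ha0 _ _)
  have hpt : ∀ x, ‖(K u : ∀ _ : ℤ, ℂ) x‖ ≤ ∑' y, a x y * b y := by
    intro x
    have h1 := hasSum_apply K u x
    have hsn : Summable (fun y => ‖u y * (K (lp.single 2 y 1) : ∀ _ : ℤ, ℂ) x‖) := by
      refine Summable.of_nonneg_of_le (fun y => norm_nonneg _) ?_ (hsab x)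
      intro y
      rw [norm_mul]
      calc ‖u y‖ * ‖(K (lp.single 2 y 1) : ∀ _ : ℤ, ℂ) x‖
          ≤ ‖u y‖ * a x y := mul_le_mul_of_nonneg_left (hKa x y) (norm_nonneg _)
        _ = a x y * b y := by rw [hbdef]; ring
    calc ‖(K u : ∀ _ : ℤ, ℂ) x‖ = ‖∑' y, u y * (K (lp.single 2 y 1) : ∀ _ : ℤ, ℂ) x‖ := by
          rw [h1.tsum_eq]
      _ ≤ ∑' y, ‖u y * (K (lp.single 2 y 1) : ∀ _ : ℤ, ℂ) x‖ := norm_tsum_le_tsum_norm hsn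
      _ ≤ ∑' y, a x y * b y := by
          refine Summable.tsum_le_tsum ?_ hsn (hsab x)
          intro y
          rw [norm_mul]
          calc ‖u y‖ * ‖(K (lp.single 2 y 1) : ∀ _ : ℤ, ℂ) x‖
              ≤ ‖u y‖ * a x y := mul_le_mul_of_nonneg_left (hKa x y) (norm_nonneg _)
            _ = a x y * b y := by rw [hbdef]; ring
  have hCS : ∀ x, (∑' y, a x y * b y) ^ 2 ≤ C * ∑' y, a x y * b y ^ 2 := by
    intro x
    have hV0 : 0 ≤ ∑' y, a x y * b y ^ 2 :=
      tsum_nonneg fun y => mul_nonneg (ha0 _ _) (sq_nonneg _)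
    have hCV0 : 0 ≤ C * ∑' y, a x y * b y ^ 2 := mul_nonneg hC hV0
    have hT0 : 0 ≤ ∑' y, a x y * b y :=
      tsum_nonneg fun y => mul_nonneg (ha0 _ _) (hb0 _)
    have hle : ∑' y, a x y * b y ≤ Real.sqrt (C * ∑' y, a x y * b y ^ 2) := by
      refine Summable.tsum_le_of_sum_le (hsab x) ?_
      intro s
      rw [Real.le_sqrt (Finset.sum_nonneg fun y _ => mul_nonneg (ha0 _ _) (hb0 _)) hCV0]
      have hcs := Finset.sum_mul_sq_le_sq_mul_sq s (fun y => Real.sqrt (a x y))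
        (fun y => Real.sqrt (a x y) * b y)
      have he1 : ∀ y, Real.sqrt (a x y) * (Real.sqrt (a x y) * b y) = a x y * b y := by
        intro y
        rw [← mul_assoc, Real.mul_self_sqrt (ha0 x y)]
      have he2 : ∀ y, Real.sqrt (a x y) ^ 2 = a x y := fun y => Real.sq_sqrt (ha0 x y)
      have he3 : ∀ y, (Real.sqrt (a x y) * b y) ^ 2 = a x y * b y ^ 2 := by
        intro y
        rw [mul_pow, he2]
      rw [Finset.sum_congr rfl (fun y _ => he1 y), Finset.sum_congr rfl (fun y _ => he2 y),
        Finset.sum_congr rfl (fun y _ => he3 y)] at hcs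
      refine le_trans hcs ?_
      have hs1 : ∑ y ∈ s, a x y ≤ C := by
        refine le_trans (Summable.sum_le_tsum s (fun y _ => ha0 x y) (hasum x)) (hrow x)
      have hs2 : ∑ y ∈ s, a x y * b y ^ 2 ≤ ∑' y, a x y * b y ^ 2 :=
        Summable.sum_le_tsum s (fun y _ => mul_nonneg (ha0 _ _) (sq_nonneg _)) (hsab2 x)
      refine mul_le_mul hs1 hs2 (Finset.sum_nonneg fun y _ => mul_nonneg (ha0 _ _) (sq_nonneg _)) hC
    calc (∑' y, a x y * b y) ^ 2 ≤ Real.sqrt (C * ∑' y, a x y * b y ^ 2) ^ 2 :=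
          pow_le_pow_left₀ hT0 hle 2
      _ = C * ∑' y, a x y * b y ^ 2 := Real.sq_sqrt hCV0
  apply lp.norm_le_of_forall_sum_le p2 (mul_nonneg hC (norm_nonneg u))
  intro s
  have hswap : ∑ x ∈ s, ∑' y, a x y * b y ^ 2 = ∑' y, ∑ x ∈ s, a x y * b y ^ 2 :=
    (Summable.tsum_finsetSum fun x _ => hsab2 x).symm
  have hcol : ∀ y, ∑ x ∈ s, a x y ≤ C := by
    intro y
    have h1 : ∑ x ∈ s, a x y = ∑ x ∈ s, a y x := Finset.sum_congr rfl fun x _ => hsym x y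
    rw [h1]
    exact le_trans (Summable.sum_le_tsum s (fun x _ => ha0 y x) (hasum y)) (hrow y)
  calc ∑ x ∈ s, ‖(K u : ∀ _ : ℤ, ℂ) x‖ ^ (2:ℝ≥0∞).toReal
      = ∑ x ∈ s, ‖(K u : ∀ _ : ℤ, ℂ) x‖ ^ 2 := Finset.sum_congr rfl fun x _ => rpt2 _
    _ ≤ ∑ x ∈ s, C * ∑' y, a x y * b y ^ 2 := by
        refine Finset.sum_le_sum fun x _ => ?_
        exact le_trans (pow_le_pow_left₀ (norm_nonneg _) (hpt x) 2) (hCS x)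
    _ = C * ∑' y, ∑ x ∈ s, a x y * b y ^ 2 := by rw [← Finset.mul_sum, hswap]
    _ = C * ∑' y, (∑ x ∈ s, a x y) * b y ^ 2 := by
        congr 1
        exact tsum_congr fun y => (Finset.sum_mul ..).symm
    _ ≤ C * ∑' y, C * b y ^ 2 := by
        refine mul_le_mul_of_nonneg_left ?_ hC
        refine Summable.tsum_le_tsum ?_ ?_ (hub2.mul_left C)
        · intro y
          exact mul_le_mul_of_nonneg_right (hcol y) (sq_nonneg _)
        · have : (fun y => (∑ x ∈ s, a x y) * b y ^ 2)
              = fun y => ∑ x ∈ s, a x y * b y ^ 2 := by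
            funext y
            exact Finset.sum_mul ..
          rw [this]
          exact summable_sum fun x _ => hsab2 x
    _ = C * (C * ∑' y, b y ^ 2) := by rw [tsum_mul_left]
    _ = (C * ‖u‖) ^ (2:ℝ≥0∞).toReal := by
        rw [rpt2, ← hnu2]
        ring

end Schur


section RealLemmas

lemma min_lip (a b n : ℝ) : |min a n - min b n| ≤ |a - b| := by
  have h3 := le_abs_self (a - b)
  have h4 := neg_abs_le (a - b)
  rw [abs_le]
  constructor <;>
  · simp only [min_def]
    split_ifs <;> linarith

lemma exp_mu_le {t μ : ℝ} (ht : 0 ≤ t) (h0 : 0 ≤ μ) (h1 : μ ≤ 1) :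
    Real.exp (μ * t) - 1 ≤ μ * (Real.exp t - 1) := by
  have h := Real.geom_mean_le_arith_mean2_weighted h0 (by linarith : (0:ℝ) ≤ 1 - μ)
    (Real.exp_pos t).le zero_le_one (by ring)
  rw [Real.one_rpow, mul_one, mul_one] at h
  have he : Real.exp t ^ μ = Real.exp (μ * t) := by
    rw [← Real.exp_mul, mul_comm]
  rw [he] at h
  linarith

lemma abs_exp_sub_one_le (t : ℝ) : |Real.exp t - 1| ≤ Real.exp |t| - 1 := by
  rcases le_total 0 t with ht | ht
  · rw [abs_of_nonneg ht, abs_of_nonneg (by linarith [Real.one_le_exp ht])]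
  · rw [abs_of_nonpos ht, abs_of_nonpos (by linarith [Real.exp_le_one_iff.mpr ht] : Real.exp t - 1 ≤ 0)]
    have h1 := Real.add_one_le_exp t
    have h2 := Real.add_one_le_exp (-t)
    linarith

end RealLemmas

end

end CT18


set_option maxHeartbeats 1000000 in
/-- Combes–Thomas estimate on `ℓ²(ℤ)`. -/
theorem stmt18
    (H : lp (fun _ : ℤ => ℂ) 2 →L[ℂ] lp (fun _ : ℤ => ℂ) 2)
    (Hm : ℤ → ℤ → ℂ) (hHm : ∀ x y : ℤ, Hm x y = (H (lp.single 2 y (1:ℂ)) : ∀ _ : ℤ, ℂ) x)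
    (hsa : ∀ x y : ℤ, Hm x y = (starRingEnd ℂ) (Hm y x))
    (δ S : ℝ) (hδ : 0 < δ) (hS : 0 < S)
    (hsum : ∀ x : ℤ, Summable (fun y : ℤ =>
      ‖Hm x y‖ * (Real.exp (δ * |(x : ℝ) - (y : ℝ)|) - 1)))
    (hbound : ∀ x : ℤ, (∑' y : ℤ,
      ‖Hm x y‖ * (Real.exp (δ * |(x : ℝ) - (y : ℝ)|) - 1)) ≤ S)
    (E ε μ : ℝ) (hε : 0 < ε) (hμ : μ ∈ Set.Ioc (0:ℝ) 1) (hεS : 2 * S * μ ≤ ε) :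
    ∃ G : lp (fun _ : ℤ => ℂ) 2 →L[ℂ] lp (fun _ : ℤ => ℂ) 2,
      ((((E : ℂ) + (ε : ℂ) * Complex.I) • ContinuousLinearMap.id ℂ (lp (fun _ : ℤ => ℂ) 2)
          - H).comp G = ContinuousLinearMap.id ℂ _) ∧
      (G.comp (((E : ℂ) + (ε : ℂ) * Complex.I) • ContinuousLinearMap.id ℂ (lp (fun _ : ℤ => ℂ) 2)
          - H) = ContinuousLinearMap.id ℂ _) ∧
      ∀ x y : ℤ, ‖(G (lp.single 2 y (1:ℂ)) : ∀ _ : ℤ, ℂ) x‖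
        ≤ (2/ε) * Real.exp (-μ * δ * |(x : ℝ) - (y : ℝ)|) := by
  obtain ⟨hμ0, hμ1⟩ := hμ
  set z : ℂ := (E : ℂ) + (ε : ℂ) * Complex.I with hzdef
  have hzim : z.im = ε := by simp [hzdef]
  have hsymm : ∀ u v : ℓ², @inner ℂ _ _ (H u) v = @inner ℂ _ _ u (H v) :=
    CT18.H_symm H Hm hHm hsa
  obtain ⟨G, hGl, hGr⟩ := CT18.invertible H hsymm z (by rw [hzim]; exact ne_of_gt hε)
  refine ⟨G, hGl, hGr, ?_⟩
  intro x y
  have hδμ : 0 ≤ μ * δ := by positivity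
  set d : ℤ → ℝ := fun t => |(t:ℝ) - (y:ℝ)| with hd
  set n : ℝ := μ * δ * d x with hn
  have hn0 : 0 ≤ n := mul_nonneg hδμ (abs_nonneg _)
  set w : ℤ → ℝ := fun t => min (μ * δ * d t) n with hw
  have h0w : ∀ t, 0 ≤ w t := fun t => le_min (mul_nonneg hδμ (abs_nonneg _)) hn0
  have hwn : ∀ t, w t ≤ n := fun t => min_le_right _ _
  have hwy : w y = 0 := by
    have : d y = 0 := by simp [hd]
    simp [hw, this, min_eq_left hn0]
  have hwx : w x = n := by simp [hw, hn]
  set W := CT18.mulCLM (fun t => Real.exp (w t)) (Real.exp n) (Real.exp_pos n).le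
    (fun t => by
      rw [abs_of_pos (Real.exp_pos _)]
      exact Real.exp_le_exp.mpr (hwn t)) with hWdef
  set W' := CT18.mulCLM (fun t => Real.exp (-(w t))) 1 zero_le_one
    (fun t => by
      rw [abs_of_pos (Real.exp_pos _)]
      exact Real.exp_le_one_iff.mpr (by linarith [h0w t])) with hW'def
  have hW'W : ∀ u : ℓ², W' (W u) = u := by
    intro u
    apply CT18.lp2_ext
    intro t
    rw [hW'def, CT18.mulCLM_apply, hWdef, CT18.mulCLM_apply, ← mul_assoc,
      ← Complex.ofReal_mul, ← Real.exp_add]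
    simp
  have hWW' : ∀ u : ℓ², W (W' u) = u := by
    intro u
    apply CT18.lp2_ext
    intro t
    rw [hWdef, CT18.mulCLM_apply, hW'def, CT18.mulCLM_apply, ← mul_assoc,
      ← Complex.ofReal_mul, ← Real.exp_add]
    simp
  set K := (W.comp H).comp W' - H with hKdef
  set A := z • ContinuousLinearMap.id ℂ ℓ² - H with hAdef
  have hAv : ∀ v : ℓ², A v = z • v - H v := fun v => rfl
  have hAG : ∀ v : ℓ², A (G v) = v := by
    intro v
    have h := ContinuousLinearMap.ext_iff.mp hGl v
    simpa using h
  -- the matrix bound for K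
  set a : ℤ → ℤ → ℝ := fun s t =>
    μ * (‖Hm s t‖ * (Real.exp (δ * |(s:ℝ) - (t:ℝ)|) - 1)) with ha
  have hexp1 : ∀ s t : ℤ, |w s - w t| ≤ μ * δ * |(s:ℝ) - (t:ℝ)| := by
    intro s t
    calc |w s - w t| ≤ |μ * δ * d s - μ * δ * d t| := CT18.min_lip _ _ _
      _ = μ * δ * |d s - d t| := by rw [← mul_sub, abs_mul, abs_of_nonneg hδμ]
      _ ≤ μ * δ * |(s:ℝ) - (t:ℝ)| := by
          refine mul_le_mul_of_nonneg_left ?_ hδμ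
          have h := abs_abs_sub_abs_le_abs_sub ((s:ℝ) - (y:ℝ)) ((t:ℝ) - (y:ℝ))
          have h2 : (s:ℝ) - (y:ℝ) - ((t:ℝ) - (y:ℝ)) = (s:ℝ) - (t:ℝ) := by ring
          rw [h2] at h
          exact h
  have hW'single : ∀ t : ℤ, W' (lp.single 2 t 1)
      = (lp.single 2 t (((Real.exp (-(w t)) : ℝ) : ℂ)) : ℓ²) := by
    intro t
    apply CT18.lp2_ext
    intro r
    rw [hW'def, CT18.mulCLM_apply]
    by_cases hrt : r = t
    · subst hrt
      rw [lp.single_apply_self, lp.single_apply_self, mul_one]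
    · rw [lp.single_apply_ne 2 t _ hrt, lp.single_apply_ne 2 t _ hrt, mul_zero]
  have hKcoord : ∀ s t : ℤ, (K (lp.single 2 t 1) : ∀ _ : ℤ, ℂ) s
      = (((Real.exp (w s - w t) : ℝ) : ℂ) - 1) * Hm s t := by
    intro s t
    have h1 : (K (lp.single 2 t 1) : ∀ _ : ℤ, ℂ) s
        = (W (H (W' (lp.single 2 t 1))) : ∀ _ : ℤ, ℂ) s
          - (H (lp.single 2 t 1) : ∀ _ : ℤ, ℂ) s := by
      rw [hKdef]
      rw [ContinuousLinearMap.sub_apply, ContinuousLinearMap.comp_apply,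
        ContinuousLinearMap.comp_apply, lp.coeFn_sub, Pi.sub_apply]
    rw [h1, hW'single t, CT18.single_eq_smul, map_smul, map_smul, lp.coeFn_smul,
      Pi.smul_apply, hWdef, CT18.mulCLM_apply, ← hHm, smul_eq_mul]
    rw [← mul_assoc, ← Complex.ofReal_mul, ← Real.exp_add]
    rw [show -(w t) + w s = w s - w t by ring]
    ring
  have hKm : ∀ s t : ℤ, ‖(K (lp.single 2 t 1) : ∀ _ : ℤ, ℂ) s‖ ≤ a s t := by
    intro s t
    rw [hKcoord s t, norm_mul]
    have h1 : ‖(((Real.exp (w s - w t) : ℝ) : ℂ) - 1)‖ = |Real.exp (w s - w t) - 1| := by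
      rw [show (((Real.exp (w s - w t) : ℝ) : ℂ) - 1) = (((Real.exp (w s - w t) - 1 : ℝ)) : ℂ)
        by push_cast; ring]
      rw [Complex.norm_real, Real.norm_eq_abs]
    rw [h1]
    have h2 : |Real.exp (w s - w t) - 1| ≤ μ * (Real.exp (δ * |(s:ℝ) - (t:ℝ)|) - 1) := by
      calc |Real.exp (w s - w t) - 1| ≤ Real.exp |w s - w t| - 1 :=
            CT18.abs_exp_sub_one_le _
        _ ≤ Real.exp (μ * δ * |(s:ℝ) - (t:ℝ)|) - 1 := by
            have := Real.exp_le_exp.mpr (hexp1 s t)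
            linarith
        _ ≤ μ * (Real.exp (δ * |(s:ℝ) - (t:ℝ)|) - 1) := by
            have harg : μ * δ * |(s:ℝ) - (t:ℝ)| = μ * (δ * |(s:ℝ) - (t:ℝ)|) := by ring
            rw [harg]
            exact CT18.exp_mu_le (by positivity) (le_of_lt hμ0) hμ1
    have h3 : ‖Hm s t‖ = ‖Hm s t‖ := rfl
    rw [h3, ha]
    calc |Real.exp (w s - w t) - 1| * ‖Hm s t‖
        ≤ (μ * (Real.exp (δ * |(s:ℝ) - (t:ℝ)|) - 1)) * ‖Hm s t‖ :=
          mul_le_mul_of_nonneg_right h2 (norm_nonneg _)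
      _ = μ * (‖Hm s t‖ * (Real.exp (δ * |(s:ℝ) - (t:ℝ)|) - 1)) := by ring
  have hexp0 : ∀ s t : ℤ, (0:ℝ) ≤ Real.exp (δ * |(s:ℝ) - (t:ℝ)|) - 1 := by
    intro s t
    have := Real.one_le_exp (show (0:ℝ) ≤ δ * |(s:ℝ) - (t:ℝ)| by positivity)
    linarith
  have ha0 : ∀ s t, 0 ≤ a s t := fun s t =>
    mul_nonneg (le_of_lt hμ0) (mul_nonneg (norm_nonneg _) (hexp0 s t))
  have hasym : ∀ s t, a s t = a t s := by
    intro s t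
    rw [ha]
    simp only
    rw [hsa s t, Complex.norm_conj, abs_sub_comm ((s:ℝ)) ((t:ℝ))]
  have hasum' : ∀ s, Summable (a s) := fun s => (hsum s).mul_left μ
  have harow : ∀ s, ∑' t, a s t ≤ μ * S := by
    intro s
    rw [ha]
    simp only
    rw [tsum_mul_left]
    exact mul_le_mul_of_nonneg_left (hbound s) (le_of_lt hμ0)
  have hKn : ∀ v : ℓ², ‖K v‖ ≤ (μ * S) * ‖v‖ := fun v =>
    CT18.schur K a (μ * S) (mul_nonneg (le_of_lt hμ0) hS.le) ha0 hasym hKm hasum' harow v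
  have hμS : μ * S ≤ ε / 2 := by nlinarith
  have hALow : ∀ v : ℓ², ε * ‖v‖ ≤ ‖A v‖ := by
    intro v
    have h := CT18.lower H hsymm z v
    rw [hzim, abs_of_pos hε] at h
    rw [hAv]
    exact h
  set R := (W.comp G).comp W' with hRdef
  have hRv : ∀ v : ℓ², R v = W (G (W' v)) := fun v => rfl
  have hid : ∀ v : ℓ², A (R v) - K (R v) = v := by
    intro v
    rw [hRv]
    have h1 : K (W (G (W' v))) = W (H (G (W' v))) - H (W (G (W' v))) := by
      rw [hKdef]
      rw [ContinuousLinearMap.sub_apply, ContinuousLinearMap.comp_apply,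
        ContinuousLinearMap.comp_apply, hW'W]
    rw [hAv, h1]
    have h2 : z • W (G (W' v)) - H (W (G (W' v)))
        - (W (H (G (W' v))) - H (W (G (W' v))))
        = W (z • G (W' v)) - W (H (G (W' v))) := by
      rw [map_smul]
      abel
    rw [h2, ← map_sub, ← hAv, hAG, hWW']
  have hRnorm : ∀ v : ℓ², ‖R v‖ ≤ (2/ε) * ‖v‖ := by
    intro v
    have h1 : ε * ‖R v‖ ≤ ‖A (R v)‖ := hALow _
    have h2 : ‖K (R v)‖ ≤ (ε/2) * ‖R v‖ :=
      le_trans (hKn _) (mul_le_mul_of_nonneg_right hμS (norm_nonneg _))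
    have h3 : ‖A (R v) - K (R v)‖ = ‖v‖ := by rw [hid v]
    have h4 : ‖A (R v)‖ - ‖K (R v)‖ ≤ ‖v‖ := by
      rw [← h3]
      exact norm_sub_norm_le _ _
    rw [div_mul_eq_mul_div, le_div_iff₀ hε]
    nlinarith [norm_nonneg (R v)]
  have hW'y : W' (lp.single 2 y 1) = (lp.single 2 y (1:ℂ) : ℓ²) := by
    rw [hW'single y, hwy]
    congr 1
    norm_num
  have hRcoord : (R (lp.single 2 y 1) : ∀ _ : ℤ, ℂ) x
      = ((Real.exp n : ℝ) : ℂ) * (G (lp.single 2 y 1) : ∀ _ : ℤ, ℂ) x := by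
    rw [hRv, hW'y, hWdef, CT18.mulCLM_apply, hwx]
  have h6 : ‖(R (lp.single 2 y 1) : ∀ _ : ℤ, ℂ) x‖ ≤ 2/ε := by
    have h7 : ‖(R (lp.single 2 y 1) : ∀ _ : ℤ, ℂ) x‖ ≤ ‖R (lp.single 2 y 1)‖ :=
      lp.norm_apply_le_norm two_ne_zero (R (lp.single 2 y 1)) x
    have h8 : ‖(lp.single 2 y (1:ℂ) : ℓ²)‖ = 1 := by
      have := lp.norm_single (E := fun _ : ℤ => ℂ) (p := 2) (by norm_num) y (1:ℂ)
      simpa using this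
    have h9 := hRnorm (lp.single 2 y 1)
    rw [h8, mul_one] at h9
    exact le_trans h7 h9
  have h5 : ‖(G (lp.single 2 y (1:ℂ)) : ∀ _ : ℤ, ℂ) x‖
      = Real.exp (-n) * ‖(R (lp.single 2 y 1) : ∀ _ : ℤ, ℂ) x‖ := by
    rw [hRcoord, norm_mul, Complex.norm_real, Real.norm_eq_abs, abs_of_pos (Real.exp_pos _), ← mul_assoc,
      ← Real.exp_add]
    norm_num
  rw [h5]
  have hfin : -μ * δ * |(x:ℝ) - (y:ℝ)| = -n := by rw [hn, hd]; ring
  rw [hfin]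
  calc Real.exp (-n) * ‖(R (lp.single 2 y 1) : ∀ _ : ℤ, ℂ) x‖
      ≤ Real.exp (-n) * (2/ε) := mul_le_mul_of_nonneg_left h6 (Real.exp_pos _).le
    _ = 2/ε * Real.exp (-n) := by ring
end

section
/- Boundedness of the potential weight: Let E be real with |E| ≤ √(32/9), 𝓔 = E/2 - i√(1-E²/4), and define for (λ₁,λ₂) ∈ ℝ², λ₁ ≠ conj(𝓔): e^{-V(λ)} := ((conj(𝓔) - iλ₂)/(conj(𝓔) - λ₁)) · exp(-½(λ₁² + λ₂²) - 𝓔(λ₁ - iλ₂)). Then |e^{-V(λ)}| ≤ 1 for all such λ; equivalently, Re V(λ) ≥ 0, with equality exactly at λ = (0,0) and λ = (0, 2√(1 - E²/4)). -/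
open Complex

lemma uexp_le_one' {u : ℝ} : u * Real.exp (1 - u) ≤ 1 := by
  have h : u ≤ Real.exp (u - 1) := by
    have := Real.add_one_le_exp (u - 1); linarith
  calc u * Real.exp (1 - u) ≤ Real.exp (u - 1) * Real.exp (1 - u) :=
        mul_le_mul_of_nonneg_right h (Real.exp_pos _).le
    _ = 1 := by rw [← Real.exp_add]; norm_num

lemma uexp_lt_one' {u : ℝ} (hne : u ≠ 1) : u * Real.exp (1 - u) < 1 := by
  have h : u < Real.exp (u - 1) := by
    have := Real.add_one_lt_exp (x := u - 1) (by intro h; apply hne; linarith); linarith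
  calc u * Real.exp (1 - u) < Real.exp (u - 1) * Real.exp (1 - u) :=
        mul_lt_mul_of_pos_right h (Real.exp_pos _)
    _ = 1 := by rw [← Real.exp_add]; norm_num

lemma stmt19_key_pos (a : ℝ) (ha : a^2 ≤ 8/9) {s : ℝ} (hs : 0 < s) :
    1 < (1 - 2*a*s + s^2) * Real.exp (s^2 + 2*a*s) := by
  set F : ℝ → ℝ := fun t => (1 - 2*a*t + t^2) * Real.exp (t^2 + 2*a*t) with hF
  have hder : ∀ t : ℝ, HasDerivAt F
      (2*t*(t^2 - a*t + (2 - 2*a^2)) * Real.exp (t^2 + 2*a*t)) t := by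
    intro t
    have h1 : HasDerivAt (fun t : ℝ => t^2) (2*t) t := by
      simpa using hasDerivAt_pow 2 t
    have h2 : HasDerivAt (fun t : ℝ => 2*a*t) (2*a) t := by
      simpa using (hasDerivAt_id t).const_mul (2*a)
    have hW : HasDerivAt (fun t : ℝ => t^2 + 2*a*t) (2*t + 2*a) t := h1.add h2
    have hP : HasDerivAt (fun t : ℝ => 1 - 2*a*t + t^2) (-(2*a) + 2*t) t := by
      exact (((hasDerivAt_const t (1:ℝ)).sub h2).add h1).congr_deriv (by ring)
    have := hP.mul hW.exp
    exact this.congr_deriv (by ring)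
  have hderiv : ∀ t : ℝ, deriv F t = 2*t*(t^2 - a*t + (2 - 2*a^2)) * Real.exp (t^2 + 2*a*t) :=
    fun t => (hder t).deriv
  have hcont : Continuous F := by fun_prop
  have hF0 : F 0 = 1 := by simp [hF]
  have hQ : ∀ t : ℝ, 0 ≤ t^2 - a*t + (2 - 2*a^2) := by
    intro t; nlinarith [sq_nonneg (t - a/2)]
  have hQpos : ∀ t : ℝ, t ≠ a/2 → 0 < t^2 - a*t + (2 - 2*a^2) := by
    intro t ht
    have hne : t - a/2 ≠ 0 := sub_ne_zero.mpr ht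
    have : 0 < (t - a/2)^2 := by positivity
    nlinarith
  have hmono : MonotoneOn F (Set.Ici 0) := by
    apply monotoneOn_of_deriv_nonneg (convex_Ici 0) hcont.continuousOn
    · intro t _
      exact (hder t).differentiableAt.differentiableWithinAt
    · intro t ht
      rw [interior_Ici] at ht
      rw [hderiv]
      have := hQ t
      have := Real.exp_pos (t^2 + 2*a*t)
      have ht' : (0:ℝ) < t := ht
      positivity
  by_cases hc : 0 < a/2 ∧ a/2 < s
  · have hsm : StrictMonoOn F (Set.Icc (a/2) s) := by
      apply strictMonoOn_of_deriv_pos (convex_Icc _ _) hcont.continuousOn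
      intro t ht
      rw [interior_Icc] at ht
      rw [hderiv]
      have htpos : 0 < t := lt_trans hc.1 ht.1
      have hQt : 0 < t^2 - a*t + (2 - 2*a^2) := hQpos t (ne_of_gt ht.1)
      have := Real.exp_pos (t^2 + 2*a*t)
      positivity
    have h1 : F (a/2) < F s := hsm (Set.left_mem_Icc.mpr hc.2.le)
      (Set.right_mem_Icc.mpr hc.2.le) hc.2
    have h2 : F 0 ≤ F (a/2) := hmono (Set.mem_Ici.mpr le_rfl)
      (Set.mem_Ici.mpr hc.1.le) hc.1.le
    rw [hF0] at h2
    exact lt_of_le_of_lt h2 h1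
  · push_neg at hc
    have hsm : StrictMonoOn F (Set.Icc 0 s) := by
      apply strictMonoOn_of_deriv_pos (convex_Icc _ _) hcont.continuousOn
      intro t ht
      rw [interior_Icc] at ht
      rw [hderiv]
      have htne : t ≠ a/2 := by
        rcases lt_or_ge 0 (a/2) with h | h
        · exact ne_of_lt (lt_of_lt_of_le ht.2 (hc h))
        · exact ne_of_gt (lt_of_le_of_lt h ht.1)
      have hQt := hQpos t htne
      have := Real.exp_pos (t^2 + 2*a*t)
      have := ht.1
      positivity
    have := hsm (Set.left_mem_Icc.mpr hs.le) (Set.right_mem_Icc.mpr hs.le) hs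
    rwa [hF0] at this

set_option maxHeartbeats 1000000 in
lemma stmt19_core (a b x y : ℝ) (ha2 : a^2 ≤ 8/9) (hab : a^2 + b^2 = 1) (hbpos : 0 < b) :
    ‖(((((a:ℂ) + Complex.I * (b:ℂ)) - Complex.I * (y : ℂ)) /
        (((a:ℂ) + Complex.I * (b:ℂ)) - (x : ℂ))) *
      Complex.exp (-(1/2 : ℂ) * ((x : ℂ)^2 + (y : ℂ)^2)
        - ((a:ℂ) - Complex.I * (b:ℂ)) * ((x : ℂ) - Complex.I * (y : ℂ))))‖ ≤ 1 ∧
    (‖(((((a:ℂ) + Complex.I * (b:ℂ)) - Complex.I * (y : ℂ)) /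
        (((a:ℂ) + Complex.I * (b:ℂ)) - (x : ℂ))) *
      Complex.exp (-(1/2 : ℂ) * ((x : ℂ)^2 + (y : ℂ)^2)
        - ((a:ℂ) - Complex.I * (b:ℂ)) * ((x : ℂ) - Complex.I * (y : ℂ))))‖ = 1 ↔
      (x = 0 ∧ y = 0) ∨ (x = 0 ∧ y = 2*b)) := by
  set num : ℂ := ((a:ℂ) + Complex.I * (b:ℂ)) - Complex.I * (y : ℂ) with hnum_def
  set den : ℂ := ((a:ℂ) + Complex.I * (b:ℂ)) - (x : ℂ) with hden_def
  set z : ℂ := -(1/2 : ℂ) * ((x : ℂ)^2 + (y : ℂ)^2)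
        - ((a:ℂ) - Complex.I * (b:ℂ)) * ((x : ℂ) - Complex.I * (y : ℂ)) with hz_def
  have hnum : Complex.normSq num = a^2 + (b - y)^2 := by
    simp [hnum_def, Complex.normSq_apply]
    ring
  have hden : Complex.normSq den = (a - x)^2 + b^2 := by
    simp [hden_def, Complex.normSq_apply]
    ring
  have hzre : z.re = -(x^2 + y^2)/2 - a*x + b*y := by
    simp [hz_def, ← Complex.ofReal_pow]
    ring
  set A : ℝ := ‖num / den * Complex.exp z‖ with hA_def
  have hA : A = ‖num‖ / ‖den‖ * Real.exp z.re := by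
    rw [hA_def, norm_mul, norm_div, Complex.norm_exp]
  have hA2 : A^2 = (a^2 + (b - y)^2) / ((a - x)^2 + b^2) * Real.exp (2 * z.re) := by
    rw [hA, mul_pow, div_pow, Complex.sq_norm, Complex.sq_norm, hnum, hden,
      show Real.exp z.re ^ 2 = Real.exp (2 * z.re) by rw [sq, ← Real.exp_add, two_mul]]
  have hA0 : 0 ≤ A := norm_nonneg _
  set u : ℝ := 1 - 2*b*y + y^2 with hu_def
  set v : ℝ := 1 - 2*a*x + x^2 with hv_def
  set G : ℝ := u * Real.exp (1 - u) with hG_def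
  set H : ℝ := v * Real.exp (x^2 + 2*a*x) with hH_def
  clear_value num den z A u v G H
  have hu0 : 0 ≤ u := by nlinarith [sq_nonneg (b - y)]
  have hvpos : 0 < v := by nlinarith [sq_nonneg (a - x), mul_pos hbpos hbpos]
  have hHpos : 0 < H := by rw [hH_def]; exact mul_pos hvpos (Real.exp_pos _)
  have hGH : A^2 = G / H := by
    rw [hA2]
    have e1 : a^2 + (b - y)^2 = u := by rw [hu_def]; linear_combination hab
    have e2 : (a - x)^2 + b^2 = v := by rw [hv_def]; linear_combination hab
    have e3 : Real.exp (2 * z.re) = Real.exp (1 - u) / Real.exp (x^2 + 2*a*x) := by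
      rw [← Real.exp_sub]
      congr 1
      rw [hzre, hu_def]
      ring
    rw [e1, e2, e3, div_mul_div_comm, ← hG_def, ← hH_def]
  -- H ≥ 1, strictly if x ≠ 0
  have hH1' : x ≠ 0 → 1 < H := by
    intro hx
    rcases lt_or_gt_of_ne hx with hxneg | hxpos
    · have ha2' : (-a)^2 ≤ 8/9 := by nlinarith
      have h := stmt19_key_pos (-a) ha2' (show 0 < -x by linarith)
      rw [show (-x)^2 + 2*(-a)*(-x) = x^2 + 2*a*x by ring,
        show 1 - 2*(-a)*(-x) + (-x)^2 = 1 - 2*a*x + x^2 by ring] at h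
      rw [hH_def, hv_def]; exact h
    · rw [hH_def, hv_def]; exact stmt19_key_pos a ha2 hxpos
  have hH1 : 1 ≤ H := by
    rcases eq_or_ne x 0 with hx | hx
    · rw [hH_def, hv_def, hx]
      norm_num
    · exact (hH1' hx).le
  have hG1 : G ≤ 1 := by rw [hG_def]; exact uexp_le_one'
  have hG1' : u ≠ 1 → G < 1 := fun h => by rw [hG_def]; exact uexp_lt_one' h
  have hle : A ≤ 1 := by
    have h2 : A^2 ≤ 1 := by
      rw [hGH, div_le_one hHpos]
      linarith
    nlinarith [sq_nonneg (A - 1)]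
  refine ⟨hle, ?_⟩
  constructor
  · intro hA1
    have hGHeq : G = H := by
      have h' : A^2 * H = G := by rw [hGH]; exact div_mul_cancel₀ G (ne_of_gt hHpos)
      rw [hA1, one_pow, one_mul] at h'
      exact h'.symm
    have hGeq : G = 1 := le_antisymm hG1 (by linarith)
    have hHeq : H = 1 := by linarith
    have hx0 : x = 0 := by
      by_contra hx
      have := hH1' hx
      linarith
    have hu1 : u = 1 := by
      by_contra h
      have := hG1' h
      linarith
    have hy : y * (y - 2*b) = 0 := by
      rw [hu_def] at hu1
      linear_combination hu1
    rcases mul_eq_zero.mp hy with hy0 | hy2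
    · exact Or.inl ⟨hx0, hy0⟩
    · exact Or.inr ⟨hx0, by linarith [sub_eq_zero.mp hy2]⟩
  · intro h
    have hu1 : u = 1 := by
      rw [hu_def]
      rcases h with ⟨_, hy⟩ | ⟨_, hy⟩ <;> rw [hy] <;> ring
    have hx0 : x = 0 := by rcases h with ⟨hx, _⟩ | ⟨hx, _⟩ <;> exact hx
    have hGeq : G = 1 := by rw [hG_def, hu1]; simp
    have hHeq : H = 1 := by rw [hH_def, hv_def, hx0]; norm_num
    have hA2eq : A^2 = 1 := by rw [hGH, hGeq, hHeq]; norm_num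
    have : (A - 1) * (A + 1) = 0 := by linear_combination hA2eq
    rcases mul_eq_zero.mp this with h1 | h1
    · linarith [sub_eq_zero.mp h1]
    · linarith

/-- `|e^{-V}| ≤ 1` for `|E| ≤ √(32/9)`, with equality exactly at the two minima of `Re V`. -/
theorem stmt19 (E : ℝ) (hE : |E| ≤ Real.sqrt (32/9)) :
    let ℰ : ℂ := (E/2 : ℝ) - Complex.I * (Real.sqrt (1 - E^2/4) : ℝ);
    let eV : ℝ × ℝ → ℂ := fun l =>
      (((starRingEnd ℂ) ℰ - Complex.I * (l.2 : ℂ)) / ((starRingEnd ℂ) ℰ - (l.1 : ℂ))) *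
        Complex.exp (-(1/2 : ℂ) * ((l.1 : ℂ)^2 + (l.2 : ℂ)^2)
          - ℰ * ((l.1 : ℂ) - Complex.I * (l.2 : ℂ)));
    ∀ l : ℝ × ℝ, ‖eV l‖ ≤ 1 ∧
      (‖eV l‖ = 1 ↔ l = (0, 0) ∨ l = (0, 2 * Real.sqrt (1 - E^2/4))) := by
  intro ℰ eV l
  obtain ⟨x, y⟩ := l
  have hE2 : E^2 ≤ 32/9 := by
    nlinarith [Real.sq_sqrt (show (0:ℝ) ≤ 32/9 by norm_num), _root_.sq_abs E, abs_nonneg E,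
      Real.sqrt_nonneg (32/9 : ℝ)]
  have h14 : (0:ℝ) ≤ 1 - E^2/4 := by nlinarith
  have hb2 : (Real.sqrt (1 - E^2/4))^2 = 1 - E^2/4 := Real.sq_sqrt h14
  have hbpos : 0 < Real.sqrt (1 - E^2/4) := Real.sqrt_pos.mpr (by nlinarith)
  have hab : (E/2)^2 + (Real.sqrt (1 - E^2/4))^2 = 1 := by rw [hb2]; ring
  have ha2 : (E/2)^2 ≤ 8/9 := by nlinarith
  have hconj : (starRingEnd ℂ) ℰ =
      ((E/2 : ℝ) : ℂ) + Complex.I * ((Real.sqrt (1 - E^2/4) : ℝ) : ℂ) := by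
    simp only [ℰ, map_sub, map_mul, Complex.conj_I, Complex.conj_ofReal]
    ring
  have hcore := stmt19_core (E/2) (Real.sqrt (1 - E^2/4)) x y ha2 hab hbpos
  simp only [eV, hconj]
  simp only [ℰ]
  constructor
  · exact hcore.1
  · rw [hcore.2]
    constructor
    · rintro (⟨hx, hy⟩ | ⟨hx, hy⟩)
      · left; rw [hx, hy]
      · right; rw [hx, hy]
    · rintro (h | h) <;> rw [Prod.mk.injEq] at h
      · exact Or.inl h
      · exact Or.inr h
end
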